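/- Suppose u(x) = Σ_{j=1}^n βⱼ Φ_k(x, yⱼ) − Σ_{q=1}^m α_q Φ_k(x, x_q) vanishes identically on a connected open set Υ containing all points yⱼ and x_q in its closure but excluding them, where Φ_k(x,y) = (i/4)H₀⁽¹⁾(k|x−y|), all βⱼ ≠ 0, all α_q ≠ 0, the yⱼ are pairwise distinct and the x_q are pairwise distinct. Then m = n and, after reindexing, x_q = y_q and α_q = β_q for all q. -/

import Mathlib

open Real MeasureTheory Filter
open Set

/-- Bessel function of the first kind of order `n`. -/
noncomputable def besselJ (n : ℕ) (x : ℝ) : ℝ :=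
  (1 / π) * ∫ θ in (0:ℝ)..π, Real.cos (n * θ - x * Real.sin θ)

/-- Bessel function of the second kind of order `n`. -/
noncomputable def besselY (n : ℕ) (x : ℝ) : ℝ :=
  (1 / π) * ∫ θ in (0:ℝ)..π, Real.sin (x * Real.sin θ - n * θ)
    - (1 / π) * ∫ t in Set.Ioi (0:ℝ),
        (Real.exp (n * t) + (-1 : ℝ) ^ n * Real.exp (-(n : ℝ) * t)) *
          Real.exp (-x * Real.sinh t)

/-- The plane `ℝ²`. -/
abbrev Plane := EuclideanSpace ℝ (Fin 2)

/-- The fundamental solution of the 2D Helmholtz equation,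
`Φ_k(x,y) = (i/4) H₀⁽¹⁾(k|x−y|)` where `H₀⁽¹⁾ = J₀ + iY₀`. -/
noncomputable def Phi (k : ℝ) (x y : Plane) : ℂ :=
  (Complex.I / 4) *
    ((besselJ 0 (k * dist x y) : ℂ) + Complex.I * (besselY 0 (k * dist x y) : ℂ))

/-- The Laplacian of a complex-valued function on the plane,
as the sum of the pure second partial derivatives. -/
noncomputable def lap (f : Plane → ℂ) (x : Plane) : ℂ :=
  ∑ i : Fin 2,
    iteratedFDeriv ℝ 2 f x ![EuclideanSpace.single i (1:ℝ), EuclideanSpace.single i (1:ℝ)]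

noncomputable def Iexp (x : ℝ) : ℝ := ∫ t in Set.Ioi (0:ℝ), Real.exp (-x * Real.sinh t)

lemma abs_besselJ0_le (x : ℝ) : |besselJ 0 x| ≤ 1 := by
  have h : |∫ θ in (0:ℝ)..π, Real.cos ((0:ℕ) * θ - x * Real.sin θ)| ≤ 1 * |π - 0| := by
    rw [← Real.norm_eq_abs]
    apply intervalIntegral.norm_integral_le_of_norm_le_const
    intro θ _
    simpa using Real.abs_cos_le_one _
  rw [besselJ, abs_mul, abs_of_pos (by positivity : (0:ℝ) < 1/π)]
  calc 1/π * |∫ θ in (0:ℝ)..π, Real.cos ((0:ℕ) * θ - x * Real.sin θ)|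
      ≤ 1/π * (1 * |π - 0|) := mul_le_mul_of_nonneg_left h (by positivity)
    _ = 1 := by rw [sub_zero, abs_of_pos Real.pi_pos]; field_simp

lemma besselY0_eq (x : ℝ) : besselY 0 x =
    (1/π) * (∫ θ in (0:ℝ)..π, Real.sin (x * Real.sin θ)) - (2/π) * Iexp x := by
  have hinner : ∀ θ : ℝ, Real.sin (x * Real.sin θ - (0:ℕ) * θ)
      - (1/π) * ∫ t in Set.Ioi (0:ℝ),
          (Real.exp ((0:ℕ) * t) + (-1 : ℝ) ^ (0:ℕ) * Real.exp (-((0:ℕ) : ℝ) * t)) *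
            Real.exp (-x * Real.sinh t)
      = Real.sin (x * Real.sin θ) - (2/π) * Iexp x := by
    intro θ
    have : (fun t => (Real.exp ((0:ℕ) * t) + (-1 : ℝ) ^ (0:ℕ) * Real.exp (-((0:ℕ) : ℝ) * t)) *
        Real.exp (-x * Real.sinh t)) = fun t => 2 * Real.exp (-x * Real.sinh t) := by
      funext t; norm_num
    rw [this, MeasureTheory.integral_const_mul, Iexp]
    norm_num; ring
  rw [besselY]
  rw [intervalIntegral.integral_congr (g := fun θ => Real.sin (x * Real.sin θ) - (2/π) * Iexp x)
    (fun θ _ => hinner θ)]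
  rw [intervalIntegral.integral_sub (by apply Continuous.intervalIntegrable; continuity)
    intervalIntegrable_const, intervalIntegral.integral_const]
  rw [mul_sub, smul_eq_mul, sub_zero]
  have hπ := Real.pi_pos
  field_simp

lemma integrable_exp_sinh {x : ℝ} (hx : 0 < x) :
    IntegrableOn (fun t => Real.exp (-x * Real.sinh t)) (Ioi (0:ℝ)) := by
  have hdom : IntegrableOn (fun t => Real.exp (-x * t)) (Ioi (0:ℝ)) :=
    exp_neg_integrableOn_Ioi 0 hx
  apply hdom.mono' ((Real.continuous_exp.comp (by continuity)).aestronglyMeasurable)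
  filter_upwards [self_mem_ae_restrict measurableSet_Ioi] with t ht
  simp only [Real.norm_eq_abs, Function.comp, Real.abs_exp]
  apply Real.exp_le_exp.2
  have : t ≤ Real.sinh t := (Real.self_le_sinh_iff).2 (le_of_lt ht)
  nlinarith

lemma Iexp_nonneg (x : ℝ) : 0 ≤ Iexp x :=
  setIntegral_nonneg measurableSet_Ioi (fun t _ => (Real.exp_pos _).le)

lemma Iexp_mono {r x : ℝ} (hr : 0 < r) (hrx : r ≤ x) : Iexp x ≤ Iexp r := by
  apply setIntegral_mono_on (integrable_exp_sinh (lt_of_lt_of_le hr hrx))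
    (integrable_exp_sinh hr) measurableSet_Ioi
  intro t ht
  apply Real.exp_le_exp.2
  have : 0 ≤ Real.sinh t := by
    rw [← Real.sinh_zero]; exact Real.sinh_le_sinh.2 (le_of_lt ht)
  nlinarith

lemma Iexp_ge {x T : ℝ} (hx : 0 < x) (hT : 0 < T) :
    T * Real.exp (-x * Real.sinh T) ≤ Iexp x := by
  have h1 : (∫ t in Ioc (0:ℝ) T, Real.exp (-x * Real.sinh t)) ≤ Iexp x := by
    apply setIntegral_mono_set (integrable_exp_sinh hx)
    · filter_upwards with t using (Real.exp_pos _).le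
    · exact (Ioc_subset_Ioi_self).eventuallyLE
  have h2 := setIntegral_ge_of_const_le (μ := volume) (s := Ioc (0:ℝ) T)
      (c := Real.exp (-x * Real.sinh T)) measurableSet_Ioc (by simp)
      (fun t ht => by
        apply Real.exp_le_exp.2
        have : Real.sinh t ≤ Real.sinh T := Real.sinh_le_sinh.2 ht.2
        nlinarith)
      ((integrable_exp_sinh hx).mono_set Ioc_subset_Ioi_self)
  rw [measureReal_def, Real.volume_Ioc, sub_zero, ENNReal.toReal_ofReal hT.le, smul_eq_mul] at h2
  linarith

lemma tendsto_Iexp : Tendsto Iexp (nhdsWithin 0 (Ioi 0)) atTop := by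
  rw [tendsto_atTop]
  intro M
  set T : ℝ := max M 0 + 1 with hTdef
  have hT : 0 < T := by positivity
  have hMT : M < T := lt_of_le_of_lt (le_max_left M 0) (by linarith)
  have hcont : Tendsto (fun x : ℝ => T * Real.exp (-x * Real.sinh T)) (nhds 0) (nhds T) := by
    have : Continuous (fun x : ℝ => T * Real.exp (-x * Real.sinh T)) := by continuity
    simpa using this.tendsto 0
  have hev : ∀ᶠ x in nhds (0:ℝ), M ≤ T * Real.exp (-x * Real.sinh T) :=
    hcont.eventually_const_le hMT
  filter_upwards [nhdsWithin_le_nhds hev, self_mem_nhdsWithin] with x h1 (h2 : 0 < x)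
  exact le_trans h1 (Iexp_ge h2 hT)

lemma abs_sinint_le (x : ℝ) : |(1/π) * ∫ θ in (0:ℝ)..π, Real.sin (x * Real.sin θ)| ≤ 1 := by
  have h : |∫ θ in (0:ℝ)..π, Real.sin (x * Real.sin θ)| ≤ 1 * |π - 0| := by
    rw [← Real.norm_eq_abs]
    apply intervalIntegral.norm_integral_le_of_norm_le_const
    intro θ _
    simpa using Real.abs_sin_le_one _
  rw [abs_mul, abs_of_pos (by positivity : (0:ℝ) < 1/π)]
  calc 1/π * |∫ θ in (0:ℝ)..π, Real.sin (x * Real.sin θ)|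
      ≤ 1/π * (1 * |π - 0|) := mul_le_mul_of_nonneg_left h (by positivity)
    _ = 1 := by rw [sub_zero, abs_of_pos Real.pi_pos]; field_simp

lemma abs_besselY0_le {r x : ℝ} (hr : 0 < r) (hrx : r ≤ x) :
    |besselY 0 x| ≤ 1 + (2/π) * Iexp r := by
  rw [besselY0_eq]
  have h1 := abs_sinint_le x
  have h2 : |(2/π) * Iexp x| ≤ (2/π) * Iexp r := by
    rw [abs_mul, abs_of_pos (by positivity : (0:ℝ) < 2/π),
      abs_of_nonneg (Iexp_nonneg x)]
    exact mul_le_mul_of_nonneg_left (Iexp_mono hr hrx) (by positivity)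
  calc |(1/π) * (∫ θ in (0:ℝ)..π, Real.sin (x * Real.sin θ)) - (2/π) * Iexp x|
      ≤ |(1/π) * ∫ θ in (0:ℝ)..π, Real.sin (x * Real.sin θ)| + |(2/π) * Iexp x| :=
        abs_sub _ _
    _ ≤ 1 + (2/π) * Iexp r := add_le_add h1 h2

lemma tendsto_abs_besselY0 : Tendsto (fun x => |besselY 0 x|) (nhdsWithin 0 (Ioi 0)) atTop := by
  rw [tendsto_atTop]
  intro M
  have h : Tendsto (fun x => (2/π) * Iexp x - 1) (nhdsWithin 0 (Ioi 0)) atTop :=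
    (tendsto_Iexp.const_mul_atTop (by positivity)).atTop_add tendsto_const_nhds
  filter_upwards [tendsto_atTop.1 h M] with x hx
  have : besselY 0 x ≤ 1 - (2/π) * Iexp x := by
    rw [besselY0_eq]
    have := abs_sinint_le x
    have := abs_le.1 this
    linarith [this.2]
  calc M ≤ (2/π) * Iexp x - 1 := hx
    _ ≤ -(besselY 0 x) := by linarith
    _ ≤ |besselY 0 x| := neg_le_abs _

lemma Phi_norm_ge (k : ℝ) (x y : Plane) :
    (1/4) * |besselY 0 (k * dist x y)| ≤ ‖Phi k x y‖ := by
  rw [Phi, norm_mul]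
  have h1 : ‖(Complex.I/4 : ℂ)‖ = 1/4 := by simp [norm_div, Complex.norm_I]
  rw [h1]
  apply mul_le_mul_of_nonneg_left _ (by norm_num)
  have := Complex.abs_im_le_norm (((besselJ 0 (k * dist x y) : ℝ) : ℂ)
    + Complex.I * ((besselY 0 (k * dist x y) : ℝ) : ℂ))
  simpa using this

lemma Phi_norm_le {r : ℝ} (hr : 0 < r) {k : ℝ} {x y : Plane}
    (h : r ≤ k * dist x y) :
    ‖Phi k x y‖ ≤ (1/4) * (2 + (2/π) * Iexp r) := by
  rw [Phi, norm_mul]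
  have h1 : ‖(Complex.I/4 : ℂ)‖ = 1/4 := by simp [norm_div, Complex.norm_I]
  rw [h1]
  apply mul_le_mul_of_nonneg_left _ (by norm_num)
  calc ‖((besselJ 0 (k * dist x y) : ℝ) : ℂ)
        + Complex.I * ((besselY 0 (k * dist x y) : ℝ) : ℂ)‖
      ≤ ‖((besselJ 0 (k * dist x y) : ℝ) : ℂ)‖
        + ‖Complex.I * ((besselY 0 (k * dist x y) : ℝ) : ℂ)‖ := norm_add_le _ _
    _ ≤ 1 + (1 + (2/π) * Iexp r) := by
        apply add_le_add
        · simpa using abs_besselJ0_le (k * dist x y)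
        · rw [norm_mul, Complex.norm_I, one_mul]
          simpa using abs_besselY0_le hr h
    _ = 2 + (2/π) * Iexp r := by ring

lemma tendsto_Phi_norm {k : ℝ} (hk : 0 < k) (p : Plane) :
    Tendsto (fun x => ‖Phi k x p‖) (nhdsWithin p {p}ᶜ) atTop := by
  have hdist : Tendsto (fun x : Plane => k * dist x p) (nhdsWithin p {p}ᶜ)
      (nhdsWithin 0 (Ioi 0)) := by
    rw [tendsto_nhdsWithin_iff]
    constructor
    · have : Tendsto (fun x : Plane => k * dist x p) (nhds p) (nhds (k * dist p p)) :=
        (tendsto_const_nhds.mul ((continuous_id.dist continuous_const).tendsto p))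
      simpa using this.mono_left nhdsWithin_le_nhds
    · filter_upwards [self_mem_nhdsWithin] with x hx
      exact mul_pos hk (dist_pos.2 hx)
  have h2 : Tendsto (fun x => (1/4 : ℝ) * |besselY 0 (k * dist x p)|)
      (nhdsWithin p {p}ᶜ) atTop :=
    (tendsto_abs_besselY0.comp hdist).const_mul_atTop (by norm_num)
  exact tendsto_atTop_mono (fun x => Phi_norm_ge k x p) h2

lemma eventually_Phi_bound {k : ℝ} (hk : 0 < k) {p y : Plane} (hy : y ≠ p) :
    ∀ᶠ x in nhds p, ‖Phi k x y‖ ≤ (1/4) * (2 + (2/π) * Iexp (k * dist p y / 2)) := by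
  have hd : 0 < dist p y := dist_pos.2 (fun h => hy h.symm)
  have hcont : Tendsto (fun x : Plane => dist x y) (nhds p) (nhds (dist p y)) :=
    (continuous_id.dist continuous_const).tendsto p
  have hev : ∀ᶠ x in nhds p, dist p y / 2 < dist x y :=
    hcont.eventually_const_lt (by linarith)
  filter_upwards [hev] with x hx
  exact Phi_norm_le (by positivity) (by nlinarith)

lemma ev_bound {ι : Type*} (s : Finset ι) (z : ι → Plane) (γ : ι → ℂ) {k : ℝ} (hk : 0 < k)
    {p : Plane} (hz : ∀ i ∈ s, z i ≠ p) :
    ∃ C : ℝ, ∀ᶠ x in nhds p, ‖∑ i ∈ s, γ i * Phi k x (z i)‖ ≤ C := by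
  refine ⟨∑ i ∈ s, ‖γ i‖ * ((1/4) * (2 + (2/π) * Iexp (k * dist p (z i) / 2))), ?_⟩
  have hall : ∀ᶠ x in nhds p, ∀ i ∈ s,
      ‖Phi k x (z i)‖ ≤ (1/4) * (2 + (2/π) * Iexp (k * dist p (z i) / 2)) :=
    (Finset.eventually_all s).2 (fun i hi => eventually_Phi_bound hk (hz i hi))
  filter_upwards [hall] with x hx
  calc ‖∑ i ∈ s, γ i * Phi k x (z i)‖ ≤ ∑ i ∈ s, ‖γ i * Phi k x (z i)‖ := norm_sum_le _ _
    _ ≤ _ := by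
        apply Finset.sum_le_sum
        intro i hi
        rw [norm_mul]
        exact mul_le_mul_of_nonneg_left (hx i hi) (norm_nonneg _)

lemma key {k : ℝ} (hk : 0 < k) {Υ : Set Plane} {p : Plane}
    (hp : p ∈ closure Υ) (hpn : p ∉ Υ) {c : ℂ} {R : Plane → ℂ}
    (hR : ∃ C : ℝ, ∀ᶠ x in nhds p, ‖R x‖ ≤ C)
    (hdec : ∀ x ∈ Υ, c * Phi k x p + R x = 0) : c = 0 := by
  by_contra hc
  obtain ⟨C, hC⟩ := hR
  set l := nhdsWithin p Υ with hldef
  have hlne : l.NeBot := mem_closure_iff_nhdsWithin_neBot.1 hp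
  have hl1 : l ≤ nhdsWithin p {p}ᶜ :=
    nhdsWithin_mono p (fun x hx (hxp : x = p) => hpn (hxp ▸ hx))
  have htend : Tendsto (fun x => ‖c‖ * ‖Phi k x p‖) l atTop :=
    ((tendsto_Phi_norm hk p).mono_left hl1).const_mul_atTop (norm_pos_iff.2 hc)
  have hbd : ∀ᶠ x in l, ‖c‖ * ‖Phi k x p‖ ≤ C := by
    filter_upwards [self_mem_nhdsWithin, nhdsWithin_le_nhds hC] with x hx hRx
    have hcP : c * Phi k x p = -R x := by linear_combination (hdec x hx)
    calc ‖c‖ * ‖Phi k x p‖ = ‖c * Phi k x p‖ := (norm_mul _ _).symm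
      _ = ‖R x‖ := by rw [hcP, norm_neg]
      _ ≤ C := hRx
  obtain ⟨x, hx1, hx2⟩ := ((tendsto_atTop.1 htend (C+1)).and hbd).exists
  linarith


/-- If `u(x) = Σⱼ βⱼ Φ_k(x,yⱼ) − Σ_q α_q Φ_k(x,x_q)` vanishes
identically on a connected open set `Υ` whose closure contains all the points
`yⱼ`, `x_q` but which excludes them, where all coefficients are nonzero and the
`yⱼ` (resp. `x_q`) are pairwise distinct, then `m = n` and after reindexing
`x_q = y_q` and `α_q = β_q`. -/
theorem singular_sources_match (k : ℝ) (hk : 0 < k)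
    (m n : ℕ) (xs : Fin m → Plane) (ys : Fin n → Plane)
    (α : Fin m → ℂ) (β : Fin n → ℂ)
    (hα : ∀ q, α q ≠ 0) (hβ : ∀ j, β j ≠ 0)
    (hxinj : Function.Injective xs) (hyinj : Function.Injective ys)
    (Υ : Set Plane) (hΥo : IsOpen Υ) (hΥc : IsConnected Υ)
    (hxcl : ∀ q, xs q ∈ closure Υ ∧ xs q ∉ Υ)
    (hycl : ∀ j, ys j ∈ closure Υ ∧ ys j ∉ Υ)
    (hvan : ∀ x ∈ Υ,
      (∑ j, β j * Phi k x (ys j)) - (∑ q, α q * Phi k x (xs q)) = 0) :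
    m = n ∧ ∃ e : Fin m ≃ Fin n, ∀ q, xs q = ys (e q) ∧ α q = β (e q) := by
  classical
  -- every source ys j₀ is matched by some xs q₀ with equal coefficient
  have hy2x : ∀ j₀ : Fin n, ∃ q₀ : Fin m, xs q₀ = ys j₀ ∧ α q₀ = β j₀ := by
    intro j₀
    by_cases hex : ∃ q₀, xs q₀ = ys j₀
    · obtain ⟨q₀, hq₀⟩ := hex
      refine ⟨q₀, hq₀, ?_⟩
      have hsplit : ∀ x ∈ Υ, (β j₀ - α q₀) * Phi k x (ys j₀) +
          ((∑ j ∈ Finset.univ.erase j₀, β j * Phi k x (ys j))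
            - (∑ q ∈ Finset.univ.erase q₀, α q * Phi k x (xs q))) = 0 := by
        intro x hx
        have h1 : β j₀ * Phi k x (ys j₀) + ∑ j ∈ Finset.univ.erase j₀, β j * Phi k x (ys j)
            = ∑ j, β j * Phi k x (ys j) := Finset.add_sum_erase Finset.univ
          (fun j => β j * Phi k x (ys j)) (Finset.mem_univ j₀)
        have h2 : α q₀ * Phi k x (ys j₀) + ∑ q ∈ Finset.univ.erase q₀, α q * Phi k x (xs q)
            = ∑ q, α q * Phi k x (xs q) := by
          rw [← hq₀]
          exact Finset.add_sum_erase Finset.univ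
            (fun q => α q * Phi k x (xs q)) (Finset.mem_univ q₀)
        linear_combination (hvan x hx) + h1 - h2
      obtain ⟨C1, hC1⟩ := ev_bound (Finset.univ.erase j₀) ys β hk
        (p := ys j₀) (fun j hj => fun h => (Finset.mem_erase.1 hj).1 (hyinj h))
      obtain ⟨C2, hC2⟩ := ev_bound (Finset.univ.erase q₀) xs α hk
        (p := ys j₀) (fun q hq => fun h => (Finset.mem_erase.1 hq).1 (hxinj (h.trans hq₀.symm)))
      have hR : ∃ C : ℝ, ∀ᶠ x in nhds (ys j₀),
          ‖(∑ j ∈ Finset.univ.erase j₀, β j * Phi k x (ys j))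
            - (∑ q ∈ Finset.univ.erase q₀, α q * Phi k x (xs q))‖ ≤ C := by
        refine ⟨C1 + C2, ?_⟩
        filter_upwards [hC1, hC2] with x h1 h2
        calc ‖_ - _‖ ≤ _ + _ := norm_sub_le _ _
          _ ≤ C1 + C2 := add_le_add h1 h2
      have := key hk (hycl j₀).1 (hycl j₀).2 hR hsplit
      linear_combination -this
    · exfalso
      apply hβ j₀
      have hsplit : ∀ x ∈ Υ, (β j₀) * Phi k x (ys j₀) +
          ((∑ j ∈ Finset.univ.erase j₀, β j * Phi k x (ys j))
            - (∑ q, α q * Phi k x (xs q))) = 0 := by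
        intro x hx
        have h1 : β j₀ * Phi k x (ys j₀) + ∑ j ∈ Finset.univ.erase j₀, β j * Phi k x (ys j)
            = ∑ j, β j * Phi k x (ys j) := Finset.add_sum_erase Finset.univ
          (fun j => β j * Phi k x (ys j)) (Finset.mem_univ j₀)
        linear_combination (hvan x hx) + h1
      obtain ⟨C1, hC1⟩ := ev_bound (Finset.univ.erase j₀) ys β hk
        (p := ys j₀) (fun j hj => fun h => (Finset.mem_erase.1 hj).1 (hyinj h))
      obtain ⟨C2, hC2⟩ := ev_bound Finset.univ xs α hk
        (p := ys j₀) (fun q _ => fun h => hex ⟨q, h⟩)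
      have hR : ∃ C : ℝ, ∀ᶠ x in nhds (ys j₀),
          ‖(∑ j ∈ Finset.univ.erase j₀, β j * Phi k x (ys j))
            - (∑ q, α q * Phi k x (xs q))‖ ≤ C := by
        refine ⟨C1 + C2, ?_⟩
        filter_upwards [hC1, hC2] with x h1 h2
        calc ‖_ - _‖ ≤ _ + _ := norm_sub_le _ _
          _ ≤ C1 + C2 := add_le_add h1 h2
      exact key hk (hycl j₀).1 (hycl j₀).2 hR hsplit
  -- every xs q₀ is matched by some ys j₀
  have hx2y : ∀ q₀ : Fin m, ∃ j₀ : Fin n, ys j₀ = xs q₀ := by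
    intro q₀
    by_contra hex
    push_neg at hex
    apply hα q₀
    have hsplit : ∀ x ∈ Υ, (-α q₀) * Phi k x (xs q₀) +
        ((∑ j, β j * Phi k x (ys j))
          - (∑ q ∈ Finset.univ.erase q₀, α q * Phi k x (xs q))) = 0 := by
      intro x hx
      have h2 : α q₀ * Phi k x (xs q₀) + ∑ q ∈ Finset.univ.erase q₀, α q * Phi k x (xs q)
          = ∑ q, α q * Phi k x (xs q) := Finset.add_sum_erase Finset.univ
        (fun q => α q * Phi k x (xs q)) (Finset.mem_univ q₀)
      linear_combination (hvan x hx) - h2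
    obtain ⟨C1, hC1⟩ := ev_bound Finset.univ ys β hk
      (p := xs q₀) (fun j _ => hex j)
    obtain ⟨C2, hC2⟩ := ev_bound (Finset.univ.erase q₀) xs α hk
      (p := xs q₀) (fun q hq => fun h => (Finset.mem_erase.1 hq).1 (hxinj h))
    have hR : ∃ C : ℝ, ∀ᶠ x in nhds (xs q₀),
        ‖(∑ j, β j * Phi k x (ys j))
          - (∑ q ∈ Finset.univ.erase q₀, α q * Phi k x (xs q))‖ ≤ C := by
      refine ⟨C1 + C2, ?_⟩
      filter_upwards [hC1, hC2] with x h1 h2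
      calc ‖_ - _‖ ≤ _ + _ := norm_sub_le _ _
        _ ≤ C1 + C2 := add_le_add h1 h2
    have := key hk (hxcl q₀).1 (hxcl q₀).2 hR hsplit
    linear_combination -this
  -- build the equivalence
  set g : Fin n → Fin m := fun j => (hy2x j).choose with hgdef
  have hg : ∀ j, xs (g j) = ys j ∧ α (g j) = β j := fun j => (hy2x j).choose_spec
  set f : Fin m → Fin n := fun q => (hx2y q).choose with hfdef
  have hf : ∀ q, ys (f q) = xs q := fun q => (hx2y q).choose_spec
  have hgf : ∀ q, g (f q) = q := fun q => hxinj (by rw [(hg (f q)).1, hf q])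
  have hfg : ∀ j, f (g j) = j := fun j => hyinj (by rw [hf (g j), (hg j).1])
  refine ⟨by simpa using Fintype.card_congr (⟨f, g, hgf, hfg⟩ : Fin m ≃ Fin n),
    ⟨f, g, hgf, hfg⟩, ?_⟩
  intro q
  refine ⟨(hf q).symm, ?_⟩
  have := (hg (f q)).2
  rw [hgf q] at this
  simp only [Equiv.coe_fn_mk]
  exact this
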